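/- For the convex quadratic problem of minimizing (1/2)xᵀQ_d x + bᵀx over the nonpositive orthant, with b nonincreasing and k₀ the unique threshold index satisfying b_{k₀} ≥ S_{k₀}/(k₀+1) and b_{k₀+1} < S_{k₀+1}/(k₀+2), the point x* with x*_i = (1/2)(S_{k₀}/(1+k₀) − b_i) for i ≤ k₀ and x*_i = 0 for i > k₀ is the unique global minimizer. -/

import Mathlib

open Matrix Finset
def Qmat (d : ℕ) : Matrix (Fin d) (Fin d) ℝ :=
  (2 : ℝ) • (1 : Matrix (Fin d) (Fin d) ℝ) + (2 : ℝ) • Matrix.of (fun _ _ => (1 : ℝ))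

lemma Qmat_mulVec (d : ℕ) (z : Fin d → ℝ) (i : Fin d) :
    (Qmat d).mulVec z i = 2 * z i + 2 * ∑ j, z j := by
  simp [Qmat, Matrix.mulVec, dotProduct, Matrix.one_apply, add_mul, ite_mul,
    Finset.sum_add_distrib, Finset.mul_sum]

lemma Qmat_form (d : ℕ) (z : Fin d → ℝ) :
    z ⬝ᵥ (Qmat d).mulVec z = 2 * (∑ i, z i * z i) + 2 * (∑ i, z i)^2 := by
  simp only [dotProduct, Qmat_mulVec]
  rw [Finset.sum_congr rfl (fun i _ => (by ring :
    z i * (2 * z i + 2 * ∑ j, z j) = 2 * (z i * z i) + (2 * ∑ j, z j) * z i))]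
  rw [Finset.sum_add_distrib, ← Finset.mul_sum, ← Finset.mul_sum]
  ring

theorem stmt8 (d : ℕ) (b : Fin d → ℝ)
    (hb : ∀ i j : Fin d, i ≤ j → b j ≤ b i)
    (k₀ : ℕ) (hk₀ : k₀ ≤ d)
    (S : ℝ) (hS : S = ∑ i : Fin d, if (i : ℕ) < k₀ then b i else 0)
    (hlow : ∀ i : Fin d, (i : ℕ) + 1 = k₀ → S / ((k₀ : ℝ) + 1) ≤ b i)
    (hhigh : ∀ i : Fin d, (i : ℕ) = k₀ → b i < (S + b i) / ((k₀ : ℝ) + 2))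
    (xs : Fin d → ℝ)
    (hx : ∀ i : Fin d, xs i =
      if (i : ℕ) < k₀ then (1 / 2 : ℝ) * (S / (1 + (k₀ : ℝ)) - b i) else 0) :
    (∀ i, xs i ≤ 0) ∧
    (∀ y : Fin d → ℝ, (∀ i, y i ≤ 0) →
      (1 / 2 : ℝ) * (xs ⬝ᵥ (Qmat d).mulVec xs) + b ⬝ᵥ xs
        ≤ (1 / 2 : ℝ) * (y ⬝ᵥ (Qmat d).mulVec y) + b ⬝ᵥ y) ∧
    (∀ y : Fin d → ℝ, (∀ i, y i ≤ 0) →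
      (1 / 2 : ℝ) * (y ⬝ᵥ (Qmat d).mulVec y) + b ⬝ᵥ y
        = (1 / 2 : ℝ) * (xs ⬝ᵥ (Qmat d).mulVec xs) + b ⬝ᵥ xs → y = xs) := by
  have hk1 : (0:ℝ) < (k₀:ℝ) + 1 := by positivity
  set c : ℝ := S / (1 + (k₀:ℝ)) with hc
  have hcS : ((k₀:ℝ) + 1) * c = S := by
    rw [hc]; field_simp; ring
  have hx' : ∀ i : Fin d, xs i = if (i:ℕ) < k₀ then (1/2:ℝ) * (c - b i) else 0 := hx
  -- c ≤ b i for i < k₀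
  have hcb : ∀ i : Fin d, (i:ℕ) < k₀ → c ≤ b i := by
    intro i hi
    have hk0pos : 1 ≤ k₀ := by omega
    have hlt : k₀ - 1 < d := by omega
    have h1 := hlow ⟨k₀ - 1, hlt⟩ (by simp; omega)
    have h2 : b ⟨k₀-1, hlt⟩ ≤ b i := hb i ⟨k₀-1, hlt⟩ (by simp [Fin.le_def]; omega)
    have : c = S / ((k₀:ℝ) + 1) := by rw [hc, add_comm]
    linarith [this ▸ h1]
  -- b i ≤ c for i ≥ k₀
  have hbc : ∀ i : Fin d, k₀ ≤ (i:ℕ) → b i ≤ c := by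
    intro i hi
    have hlt : k₀ < d := lt_of_le_of_lt hi i.isLt
    set i₀ : Fin d := ⟨k₀, hlt⟩ with hi₀
    have h1 := hhigh i₀ rfl
    have hk2 : (0:ℝ) < (k₀:ℝ) + 2 := by positivity
    rw [lt_div_iff₀ hk2] at h1
    have h2 : b i₀ < c := by nlinarith
    have h3 : b i ≤ b i₀ := hb i₀ i (by simp [Fin.le_def, hi₀]; omega)
    linarith
  -- the filter count
  have hfilter : (Finset.range d).filter (fun j => j < k₀) = Finset.range k₀ := by
    ext j; simp only [Finset.mem_filter, Finset.mem_range]; omega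
  have hcard : ∑ j : Fin d, (if (j:ℕ) < k₀ then (1:ℝ) else 0) = (k₀:ℝ) := by
    rw [Fin.sum_univ_eq_sum_range (fun j => if j < k₀ then (1:ℝ) else 0) d,
      ← Finset.sum_filter, hfilter]
    simp
  -- sum of xs
  have hT : ∑ j, xs j = -c/2 := by
    have h1 : ∀ j : Fin d, xs j = (if (j:ℕ) < k₀ then (1:ℝ) else 0) * (c/2)
        - (if (j:ℕ) < k₀ then b j else 0)/2 := by
      intro j; rw [hx' j]; by_cases h : (j:ℕ) < k₀ <;> simp [h] <;> ring
    rw [Finset.sum_congr rfl (fun j _ => h1 j), Finset.sum_sub_distrib,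
      ← Finset.sum_mul, hcard, ← Finset.sum_div, ← hS]
    linear_combination hcS/2
  -- nonpositivity of xs
  have hxsle : ∀ i, xs i ≤ 0 := by
    intro i
    rw [hx' i]
    by_cases h : (i:ℕ) < k₀
    · simp only [h, if_true]
      have := hcb i h
      linarith
    · simp [h]
  -- gradient
  set g : Fin d → ℝ := fun i => 2 * xs i + 2 * (∑ j, xs j) + b i with hg
  have hgval : ∀ i : Fin d, g i = 2 * xs i - c + b i := by
    intro i; rw [hg]; simp only; rw [hT]; ring
  have hgzero : ∀ i : Fin d, (i:ℕ) < k₀ → g i = 0 := by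
    intro i hi; rw [hgval i, hx' i]; simp only [hi, if_true]; ring
  have hgnonpos : ∀ i : Fin d, g i ≤ 0 := by
    intro i
    by_cases h : (i:ℕ) < k₀
    · exact le_of_eq (hgzero i h)
    · rw [hgval i, hx' i]; simp [h]
      have := hbc i (by omega)
      linarith
  have hgxs : ∀ i : Fin d, g i * xs i = 0 := by
    intro i
    by_cases h : (i:ℕ) < k₀
    · rw [hgzero i h, zero_mul]
    · rw [hx' i]; simp [h]
  -- main expansion lemma
  have key : ∀ y : Fin d → ℝ,
      ((1/2:ℝ) * (y ⬝ᵥ (Qmat d).mulVec y) + b ⬝ᵥ y)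
        - ((1/2:ℝ) * (xs ⬝ᵥ (Qmat d).mulVec xs) + b ⬝ᵥ xs)
      = (∑ i, (y i - xs i)^2) + (∑ i, (y i - xs i))^2 + ∑ i, g i * y i := by
    intro y
    have hBx : b ⬝ᵥ xs = ∑ i, b i * xs i := rfl
    have hBy : b ⬝ᵥ y = ∑ i, b i * y i := rfl
    rw [Qmat_form, Qmat_form, hBx, hBy]
    have e1 : ∑ i, (y i - xs i)^2
        = (∑ i, y i * y i) - 2 * (∑ i, xs i * y i) + ∑ i, xs i * xs i := by
      rw [Finset.sum_congr rfl (fun i _ => (by ring :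
        (y i - xs i)^2 = y i * y i - 2 * (xs i * y i) + xs i * xs i)),
        Finset.sum_add_distrib, Finset.sum_sub_distrib, ← Finset.mul_sum]
    have e2 : ∑ i, (y i - xs i) = (∑ i, y i) - ∑ i, xs i := Finset.sum_sub_distrib _ _
    have e3 : ∑ i, g i * y i
        = 2 * (∑ i, xs i * y i) + 2 * (∑ j, xs j) * (∑ i, y i) + ∑ i, b i * y i := by
      rw [hg]
      simp only
      rw [Finset.sum_congr rfl (fun i _ => (by ring :
        (2 * xs i + 2 * (∑ j, xs j) + b i) * y i
          = 2 * (xs i * y i) + (2 * (∑ j, xs j)) * y i + b i * y i)),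
        Finset.sum_add_distrib, Finset.sum_add_distrib, ← Finset.mul_sum,
        ← Finset.mul_sum]
    have e4 : ∑ i, g i * xs i = 0 := Finset.sum_eq_zero (fun i _ => hgxs i)
    have e5 : ∑ i, g i * xs i
        = 2 * (∑ i, xs i * xs i) + 2 * (∑ j, xs j) * (∑ i, xs i) + ∑ i, b i * xs i := by
      rw [hg]
      simp only
      rw [Finset.sum_congr rfl (fun i _ => (by ring :
        (2 * xs i + 2 * (∑ j, xs j) + b i) * xs i
          = 2 * (xs i * xs i) + (2 * (∑ j, xs j)) * xs i + b i * xs i)),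
        Finset.sum_add_distrib, Finset.sum_add_distrib, ← Finset.mul_sum,
        ← Finset.mul_sum]
    rw [e1, e2, e3]
    have e6 := e4.symm.trans e5
    nlinarith [e6]
  have hgy : ∀ y : Fin d → ℝ, (∀ i, y i ≤ 0) → 0 ≤ ∑ i, g i * y i := by
    intro y hy
    exact Finset.sum_nonneg (fun i _ => by nlinarith [hgnonpos i, hy i])
  refine ⟨hxsle, ?_, ?_⟩
  · intro y hy
    have h1 := key y
    have h2 : 0 ≤ ∑ i, (y i - xs i)^2 := Finset.sum_nonneg (fun i _ => sq_nonneg _)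
    have h3 : 0 ≤ (∑ i, (y i - xs i))^2 := sq_nonneg _
    have h4 := hgy y hy
    linarith
  · intro y hy heq
    have h1 := key y
    rw [heq] at h1
    have h2 : 0 ≤ ∑ i, (y i - xs i)^2 := Finset.sum_nonneg (fun i _ => sq_nonneg _)
    have h3 : 0 ≤ (∑ i, (y i - xs i))^2 := sq_nonneg _
    have h4 := hgy y hy
    have h5 : ∑ i, (y i - xs i)^2 = 0 := by linarith
    funext i
    have h6 : ∀ i ∈ Finset.univ, (0:ℝ) ≤ (y i - xs i)^2 := fun i _ => sq_nonneg _
    have h7 := (Finset.sum_eq_zero_iff_of_nonneg h6).mp h5 i (Finset.mem_univ i)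
    have := sq_eq_zero_iff.mp h7
    linarith
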